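/- With notation as in the T-hot decomposition iteration, if λ = (1/T)·min_{j∈A} T·ν(j) (i.e., the first term in the min attains the minimum), then there is an index i⋆ ∈ A with ν⁺(i⋆) = 0; if instead λ = (1/T)·min_{j∉A} (Σ_i ν(i) − T·ν(j)), then Σ_i ν⁺(i) = T·max_{j∉A} ν(j), and hence there is j⋆ ∉ A with T·ν⁺(j⋆) = Σ_i ν⁺(i). -/

import Mathlib

/-- The maximum entry of a vector indexed by a nonempty `Fin N`. -/
noncomputable def vecMax {N : ℕ} (hN : 0 < N) (a : Fin N → ℝ) : ℝ :=
  Finset.univ.sup' (Finset.univ_nonempty_iff.mpr (Fin.pos_iff_nonempty.mp hN)) a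

/-- In one step of the `T`-hot decomposition: if the first term of the min attains
the minimum then some `i⋆ ∈ A` gets `ν⁺(i⋆) = 0`; if the second term attains it then
`Σ_i ν⁺(i) = T · max_{j∉A} ν(j)` and some `j⋆ ∉ A` has `T·ν⁺(j⋆) = Σ_i ν⁺(i)`. -/
theorem stmt12 (N T : ℕ) (hT : 1 ≤ T) (hTN : T < N)
    (ν : Fin N → ℝ) (hν0 : ∀ i, 0 ≤ ν i)
    (hνrep : (T : ℝ) * vecMax (by omega) ν ≤ ∑ i, ν i)
    (A : Finset (Fin N)) (hA : A.card = T)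
    (hAtop : ∀ j ∈ A, ∀ j' ∉ A, ν j' ≤ ν j)
    (hAne : A.Nonempty) (hAcne : Aᶜ.Nonempty)
    (lam : ℝ)
    (hlam : lam = (1 / (T : ℝ)) *
      min (A.inf' hAne (fun j => (T : ℝ) * ν j))
          (Aᶜ.inf' hAcne (fun j => (∑ i, ν i) - (T : ℝ) * ν j)))
    (ν' : Fin N → ℝ) (hν' : ∀ i, ν' i = ν i - lam * (if i ∈ A then 1 else 0)) :
    (lam = (1 / (T : ℝ)) * A.inf' hAne (fun j => (T : ℝ) * ν j) →
        ∃ i ∈ A, ν' i = 0) ∧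
      (lam = (1 / (T : ℝ)) * Aᶜ.inf' hAcne (fun j => (∑ i, ν i) - (T : ℝ) * ν j) →
        (∑ i, ν' i = (T : ℝ) * Aᶜ.sup' hAcne ν) ∧
          ∃ j ∈ Aᶜ, (T : ℝ) * ν' j = ∑ i, ν' i) := by
  have hT0 : (0:ℝ) < (T:ℝ) := by exact_mod_cast hT
  -- sum of ν' equals sum ν - T * lam
  have hsum : ∑ i, ν' i = (∑ i, ν i) - (T:ℝ) * lam := by
    have : ∑ i, ν' i = ∑ i, (ν i - lam * (if i ∈ A then 1 else 0)) := by
      exact Finset.sum_congr rfl (fun i _ => hν' i)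
    rw [this, Finset.sum_sub_distrib]
    have h2 : ∑ i, lam * (if i ∈ A then (1:ℝ) else 0) = (T:ℝ) * lam := by
      rw [← Finset.mul_sum, Finset.sum_ite_mem, Finset.univ_inter,
        Finset.sum_const, hA]
      simp [mul_comm]
    rw [h2]
  constructor
  · intro h1
    obtain ⟨i, hiA, hieq⟩ := Finset.exists_mem_eq_inf' hAne (fun j => (T : ℝ) * ν j)
    refine ⟨i, hiA, ?_⟩
    have hlami : lam = ν i := by
      rw [h1, hieq]; field_simp
    rw [hν' i, if_pos hiA, hlami]; ring
  · intro h2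
    obtain ⟨j, hjAc, hjeq⟩ := Finset.exists_mem_eq_sup' hAcne ν
    have hinf : Aᶜ.inf' hAcne (fun j => (∑ i, ν i) - (T : ℝ) * ν j)
        = (∑ i, ν i) - (T:ℝ) * ν j := by
      apply le_antisymm
      · exact Finset.inf'_le _ hjAc
      · apply Finset.le_inf'
        intro b hb
        have : ν b ≤ ν j := by
          rw [← hjeq]; exact Finset.le_sup' _ hb
        nlinarith
    have hlamj : lam = (1/(T:ℝ)) * ((∑ i, ν i) - (T:ℝ) * ν j) := by
      rw [h2, hinf]
    have hsum' : ∑ i, ν' i = (T:ℝ) * ν j := by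
      rw [hsum, hlamj]; field_simp; ring
    constructor
    · rw [hsum', hjeq]
    · refine ⟨j, hjAc, ?_⟩
      have : ν' j = ν j := by
        rw [hν' j, if_neg (Finset.mem_compl.mp hjAc)]; ring
      rw [this, hsum']
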